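/- arXiv:1805.11137 — 2 statements merged into one kernel-verified Lean document; each statement's English description precedes it below -/
import Mathlib

section
/- (Composite discrete uniform Gronwall inequality.) Let G_n, H_n, P_n, V_n, Δt_n be nonnegative sequences satisfying V_{n+1} ≤ V_n + Δt_n (G_n V_n + H_n V_{n+1} + P_n) for all n ≥ n_0. Fix K_0 ≥ n_0 and N ∈ ℕ, set r = Σ_{n=K_0}^{N+K_0} Δt_n, and suppose Σ_{n=K_0}^{N+K_0} Δt_n G_n ≤ a_0, Σ_{n=K_0}^{N+K_0} Δt_n H_n ≤ a_1, Σ_{n=K_0}^{N+K_0} Δt_n P_n ≤ a_2, and Σ_{n=K_0}^{N+K_0} Δt_n V_n ≤ a_3. If additionally Δt_n H_n ≤ 1 − δ for all n ≥ n_0 for some δ ∈ (0,1], then V_{N+K_0+1} ≤ exp(a_0 + a_1/δ) (a_3/r + a_2), provided r > 0. -/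
open Finset Real

/-- Composite discrete uniform Gronwall inequality. -/
theorem composite_discrete_uniform_gronwall
    (G H P V Δt : ℕ → ℝ) (n₀ K₀ N : ℕ) (δ a₀ a₁ a₂ a₃ r : ℝ)
    (hG : ∀ n, 0 ≤ G n) (hH : ∀ n, 0 ≤ H n) (hP : ∀ n, 0 ≤ P n)
    (hV : ∀ n, 0 ≤ V n) (hΔt : ∀ n, 0 ≤ Δt n)
    (hrec : ∀ n, n₀ ≤ n → V (n + 1) ≤ V n + Δt n * (G n * V n + H n * V (n + 1) + P n))
    (hK₀ : n₀ ≤ K₀)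
    (hr : r = ∑ n ∈ Finset.Icc K₀ (N + K₀), Δt n)
    (ha₀ : ∑ n ∈ Finset.Icc K₀ (N + K₀), Δt n * G n ≤ a₀)
    (ha₁ : ∑ n ∈ Finset.Icc K₀ (N + K₀), Δt n * H n ≤ a₁)
    (ha₂ : ∑ n ∈ Finset.Icc K₀ (N + K₀), Δt n * P n ≤ a₂)
    (ha₃ : ∑ n ∈ Finset.Icc K₀ (N + K₀), Δt n * V n ≤ a₃)
    (hδ : 0 < δ) (hδ1 : δ ≤ 1)
    (hstep : ∀ n, n₀ ≤ n → Δt n * H n ≤ 1 - δ)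
    (hrpos : 0 < r) :
    V (N + K₀ + 1) ≤ Real.exp (a₀ + a₁ / δ) * (a₃ / r + a₂) := by
  set T := N + K₀ with hT
  set E := Real.exp (a₀ + a₁ / δ) with hE
  set c : ℕ → ℝ := fun n => Δt n * G n + Δt n * H n / δ with hcdef
  have hcnn : ∀ n, 0 ≤ c n := by
    intro n
    have h1 : 0 ≤ Δt n * G n := mul_nonneg (hΔt n) (hG n)
    have h2 : 0 ≤ Δt n * H n := mul_nonneg (hΔt n) (hH n)
    have h3 : 0 ≤ Δt n * H n / δ := div_nonneg h2 hδ.le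
    simp only [hcdef]; linarith
  have hPnn : ∀ n, 0 ≤ Δt n * P n := fun n => mul_nonneg (hΔt n) (hP n)
  -- one-step inequality
  have step1 : ∀ k, n₀ ≤ k →
      V (k + 1) ≤ Real.exp (c k) * (V k + Δt k * P k) := by
    intro k hk
    have hy : 0 ≤ Δt k * H k := mul_nonneg (hΔt k) (hH k)
    have hx : 0 ≤ Δt k * G k := mul_nonneg (hΔt k) (hG k)
    have hd : δ ≤ 1 - Δt k * H k := by linarith [hstep k hk]
    have hdpos : 0 < 1 - Δt k * H k := lt_of_lt_of_le hδ hd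
    have h1 : (1 - Δt k * H k) * V (k + 1) ≤ (1 + Δt k * G k) * V k + Δt k * P k := by
      nlinarith [hrec k hk]
    -- key exponential bound
    have e1 : 1 + Δt k * G k ≤ Real.exp (Δt k * G k) := by
      linarith [Real.add_one_le_exp (Δt k * G k)]
    have e2 : 1 + Δt k * H k / δ ≤ Real.exp (Δt k * H k / δ) := by
      linarith [Real.add_one_le_exp (Δt k * H k / δ)]
    have hA : (1 : ℝ) ≤ (1 - Δt k * H k) * (1 + Δt k * H k / δ) := by
      rw [← sub_nonneg]
      have key : 0 ≤ Δt k * H k * (1 - δ - Δt k * H k) := by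
        apply mul_nonneg hy; linarith [hstep k hk]
      have heq : (1 - Δt k * H k) * (1 + Δt k * H k / δ) - 1
          = Δt k * H k * (1 - δ - Δt k * H k) / δ := by field_simp; ring
      rw [heq]
      positivity
    have hprod : (1 + Δt k * G k) * (1 + Δt k * H k / δ)
        ≤ Real.exp (Δt k * G k) * Real.exp (Δt k * H k / δ) := by
      apply mul_le_mul e1 e2 _ (Real.exp_pos _).le
      have : 0 ≤ Δt k * H k / δ := div_nonneg hy hδ.le
      linarith
    have hEc : 1 + Δt k * G k ≤ (1 - Δt k * H k) * Real.exp (c k) := by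
      have hrw : Real.exp (c k) = Real.exp (Δt k * G k) * Real.exp (Δt k * H k / δ) := by
        simp only [hcdef]; rw [← Real.exp_add]
      rw [hrw]
      calc 1 + Δt k * G k = (1 + Δt k * G k) * 1 := by ring
        _ ≤ (1 + Δt k * G k) * ((1 - Δt k * H k) * (1 + Δt k * H k / δ)) := by
            apply mul_le_mul_of_nonneg_left hA; linarith
        _ = (1 - Δt k * H k) * ((1 + Δt k * G k) * (1 + Δt k * H k / δ)) := by ring
        _ ≤ (1 - Δt k * H k) * (Real.exp (Δt k * G k) * Real.exp (Δt k * H k / δ)) :=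
            mul_le_mul_of_nonneg_left hprod hdpos.le
    have hone : (1 : ℝ) ≤ (1 - Δt k * H k) * Real.exp (c k) := by linarith
    have h2 : (1 - Δt k * H k) * V (k + 1)
        ≤ (1 - Δt k * H k) * (Real.exp (c k) * (V k + Δt k * P k)) := by
      have t1 := mul_le_mul_of_nonneg_right hEc (hV k)
      have t2 := mul_le_mul_of_nonneg_right hone (hPnn k)
      nlinarith [h1, t1, t2]
    exact le_of_mul_le_mul_left h2 hdpos
  -- iterated inequality
  have key : ∀ m, n₀ ≤ m → ∀ j,
      V (m + j) ≤ Real.exp (∑ n ∈ Ico m (m + j), c n) *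
        (V m + ∑ n ∈ Ico m (m + j), Δt n * P n) := by
    intro m hm j
    induction j with
    | zero => simp
    | succ j ih =>
      have hks : m ≤ m + j := Nat.le_add_right m j
      have hSnn : 0 ≤ ∑ n ∈ Ico m (m + j), c n :=
        Finset.sum_nonneg fun n _ => hcnn n
      have hQnn : 0 ≤ ∑ n ∈ Ico m (m + j), Δt n * P n :=
        Finset.sum_nonneg fun n _ => hPnn n
      have hs1 := step1 (m + j) (le_trans hm hks)
      have hadd : m + (j + 1) = (m + j) + 1 := rfl
      rw [hadd, Finset.sum_Ico_succ_top hks, Finset.sum_Ico_succ_top hks]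
      calc V ((m + j) + 1) ≤ Real.exp (c (m + j)) * (V (m + j) + Δt (m + j) * P (m + j)) := hs1
        _ ≤ Real.exp (c (m + j)) *
            (Real.exp (∑ n ∈ Ico m (m + j), c n) *
              (V m + ∑ n ∈ Ico m (m + j), Δt n * P n) + Δt (m + j) * P (m + j)) := by
            apply mul_le_mul_of_nonneg_left _ (Real.exp_pos _).le
            linarith [ih]
        _ ≤ Real.exp ((∑ n ∈ Ico m (m + j), c n) + c (m + j)) *
            (V m + ((∑ n ∈ Ico m (m + j), Δt n * P n) + Δt (m + j) * P (m + j))) := by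
            have hre : Real.exp ((∑ n ∈ Ico m (m + j), c n) + c (m + j))
                = Real.exp (∑ n ∈ Ico m (m + j), c n) * Real.exp (c (m + j)) :=
              Real.exp_add _ _
            rw [hre]
            have h1 : (1 : ℝ) ≤ Real.exp (∑ n ∈ Ico m (m + j), c n) :=
              Real.one_le_exp hSnn
            have hh : 0 ≤ Real.exp (c (m + j)) * (Δt (m + j) * P (m + j)) *
                (Real.exp (∑ n ∈ Ico m (m + j), c n) - 1) :=
              mul_nonneg (mul_nonneg (Real.exp_pos _).le (hPnn (m + j))) (by linarith)
            nlinarith [hh]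
  -- for each m in [K₀, T]:  V (T+1) ≤ E * (V m + a₂)
  have hsum_c : ∑ n ∈ Icc K₀ T, c n ≤ a₀ + a₁ / δ := by
    have : ∑ n ∈ Icc K₀ T, c n
        = (∑ n ∈ Icc K₀ T, Δt n * G n) + (∑ n ∈ Icc K₀ T, Δt n * H n) / δ := by
      rw [Finset.sum_div, ← Finset.sum_add_distrib]
    rw [this]
    gcongr
  have main : ∀ m ∈ Icc K₀ T, V (T + 1) ≤ E * (V m + a₂) := by
    intro m hm
    simp only [Finset.mem_Icc] at hm
    have hmn₀ : n₀ ≤ m := le_trans hK₀ hm.1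
    have hmj : m + (T + 1 - m) = T + 1 := by omega
    have hk := key m hmn₀ (T + 1 - m)
    rw [hmj] at hk
    have hIco : Ico m (T + 1) = Icc m T := by
      ext n; simp [Nat.lt_succ_iff]
    rw [hIco] at hk
    have hsub : Icc m T ⊆ Icc K₀ T := by
      intro n hn; simp only [Finset.mem_Icc] at *; omega
    have hc1 : ∑ n ∈ Icc m T, c n ≤ a₀ + a₁ / δ :=
      le_trans (Finset.sum_le_sum_of_subset_of_nonneg hsub fun n _ _ => hcnn n) hsum_c
    have hc2 : ∑ n ∈ Icc m T, Δt n * P n ≤ a₂ :=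
      le_trans (Finset.sum_le_sum_of_subset_of_nonneg hsub fun n _ _ => hPnn n) ha₂
    have hexp : Real.exp (∑ n ∈ Icc m T, c n) ≤ E := Real.exp_le_exp.mpr hc1
    have hQnn : 0 ≤ ∑ n ∈ Icc m T, Δt n * P n :=
      Finset.sum_nonneg fun n _ => hPnn n
    calc V (T + 1) ≤ Real.exp (∑ n ∈ Icc m T, c n) *
          (V m + ∑ n ∈ Icc m T, Δt n * P n) := hk
      _ ≤ E * (V m + a₂) := by
          have hEnn : (0:ℝ) ≤ E := (Real.exp_pos _).le
          apply mul_le_mul hexp (by linarith) (by linarith [hV m]) hEnn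
  -- weighted sum over m
  have hEnn : 0 ≤ E := (Real.exp_pos _).le
  have ha₂nn : 0 ≤ a₂ := le_trans (Finset.sum_nonneg fun n _ => hPnn n) ha₂
  have hsum : r * V (T + 1) ≤ E * a₃ + E * a₂ * r := by
    have h1 : ∑ m ∈ Icc K₀ T, Δt m * V (T + 1)
        ≤ ∑ m ∈ Icc K₀ T, Δt m * (E * (V m + a₂)) :=
      Finset.sum_le_sum fun m hm =>
        mul_le_mul_of_nonneg_left (main m hm) (hΔt m)
    have h2 : ∑ m ∈ Icc K₀ T, Δt m * V (T + 1) = r * V (T + 1) := by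
      rw [← Finset.sum_mul, hr]
    have h3 : ∑ m ∈ Icc K₀ T, Δt m * (E * (V m + a₂))
        = E * (∑ m ∈ Icc K₀ T, Δt m * V m) + E * a₂ * (∑ m ∈ Icc K₀ T, Δt m) := by
      rw [Finset.mul_sum, Finset.mul_sum, ← Finset.sum_add_distrib]
      apply Finset.sum_congr rfl; intro m _; ring
    rw [h2, h3, ← hr] at h1
    have h4 : E * (∑ m ∈ Icc K₀ T, Δt m * V m) ≤ E * a₃ :=
      mul_le_mul_of_nonneg_left ha₃ hEnn
    linarith
  rw [show E * (a₃ / r + a₂) = (E * a₃ + E * a₂ * r) / r by field_simp,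
    le_div_iff₀ hrpos]
  linarith
end

section
/- Under the hypotheses of the composite discrete uniform Gronwall inequality, for any m with n_0 ≤ K_0 ≤ m ≤ N+K_0 one has V_{N+K_0+1} ≤ (V_m + a_2) exp( Σ_{n=m}^{N+K_0} Δt_n (G_n + H_n/δ) ). -/
open Finset Real

private lemma gronwall_step (G H P V Δt : ℕ → ℝ) (n : ℕ) (δ : ℝ)
    (hG : 0 ≤ G n) (hH : 0 ≤ H n) (hP : 0 ≤ P n)
    (hV : ∀ k, 0 ≤ V k) (hΔt : 0 ≤ Δt n)
    (hrec : V (n + 1) ≤ V n + Δt n * (G n * V n + H n * V (n + 1) + P n))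
    (hδ : 0 < δ)
    (hstep : Δt n * H n ≤ 1 - δ) :
    V (n + 1) ≤ (V n + Δt n * P n) * Real.exp (Δt n * (G n + H n / δ)) := by
  set x := Δt n * H n with hx
  have hx0 : 0 ≤ x := mul_nonneg hΔt hH
  have h1x : δ ≤ 1 - x := by linarith
  have h1xpos : 0 < 1 - x := lt_of_lt_of_le hδ h1x
  set A := V n * (1 + Δt n * G n) + Δt n * P n with hA
  have hA0 : 0 ≤ A := by
    have := hV n
    have h1 : 0 ≤ Δt n * G n := mul_nonneg hΔt hG
    have h2 : 0 ≤ Δt n * P n := mul_nonneg hΔt hP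
    nlinarith
  have key : (1 - x) * V (n + 1) ≤ A := by
    have := hrec
    simp only [hA, hx]
    nlinarith [hrec]
  have hV1 : V (n + 1) ≤ A / (1 - x) := by
    rw [le_div_iff₀ h1xpos]
    linarith [key]
  -- A / (1-x) ≤ A * (1 + x/δ) ≤ A * exp(x/δ)
  have hinv : (1 - x)⁻¹ ≤ 1 + x / δ := by
    rw [inv_le_iff_one_le_mul₀ h1xpos]
    have h1 : (1 + x / δ) * (1 - x) = 1 + (x / δ) * (1 - δ - x) := by
      field_simp; ring
    rw [h1]
    have : 0 ≤ (x / δ) * (1 - δ - x) :=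
      mul_nonneg (div_nonneg hx0 hδ.le) (by linarith)
    linarith
  have hinv2 : (1 - x)⁻¹ ≤ Real.exp (x / δ) := by
    calc (1 - x)⁻¹ ≤ 1 + x / δ := hinv
    _ ≤ Real.exp (x / δ) := by linarith [Real.add_one_le_exp (x / δ)]
  have h2 : A / (1 - x) ≤ A * Real.exp (x / δ) := by
    rw [div_eq_mul_inv]
    exact mul_le_mul_of_nonneg_left hinv2 hA0
  -- A ≤ (V n + Δt n * P n) * exp(Δt n * G n)
  have h3 : A ≤ (V n + Δt n * P n) * Real.exp (Δt n * G n) := by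
    have he : 1 + Δt n * G n ≤ Real.exp (Δt n * G n) := by
      linarith [Real.add_one_le_exp (Δt n * G n)]
    have he1 : (1 : ℝ) ≤ Real.exp (Δt n * G n) := by
      nlinarith [mul_nonneg hΔt hG]
    have h2' : 0 ≤ Δt n * P n := mul_nonneg hΔt hP
    have := hV n
    rw [hA]
    nlinarith
  have hexp : Real.exp (Δt n * G n) * Real.exp (x / δ)
      = Real.exp (Δt n * (G n + H n / δ)) := by
    rw [← Real.exp_add]
    congr 1
    rw [hx]; field_simp
  calc V (n + 1) ≤ A / (1 - x) := hV1
  _ ≤ A * Real.exp (x / δ) := h2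
  _ ≤ (V n + Δt n * P n) * Real.exp (Δt n * G n) * Real.exp (x / δ) :=
      mul_le_mul_of_nonneg_right h3 (Real.exp_pos _).le
  _ = (V n + Δt n * P n) * Real.exp (Δt n * (G n + H n / δ)) := by
      rw [mul_assoc, hexp]

theorem discrete_gronwall_intermediate_bound
    (G H P V Δt : ℕ → ℝ) (n₀ K₀ N m : ℕ) (δ a₂ : ℝ)
    (hG : ∀ n, 0 ≤ G n) (hH : ∀ n, 0 ≤ H n) (hP : ∀ n, 0 ≤ P n)
    (hV : ∀ n, 0 ≤ V n) (hΔt : ∀ n, 0 ≤ Δt n)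
    (hrec : ∀ n, n₀ ≤ n → V (n + 1) ≤ V n + Δt n * (G n * V n + H n * V (n + 1) + P n))
    (hδ : 0 < δ) (hδ1 : δ ≤ 1)
    (hstep : ∀ n, n₀ ≤ n → Δt n * H n ≤ 1 - δ)
    (ha₂ : ∑ n ∈ Finset.Icc m (N + K₀), Δt n * P n ≤ a₂)
    (hm₁ : n₀ ≤ K₀) (hm₂ : K₀ ≤ m) (hm₃ : m ≤ N + K₀) :
    V (N + K₀ + 1) ≤ (V m + a₂) *
      Real.exp (∑ n ∈ Finset.Icc m (N + K₀), Δt n * (G n + H n / δ)) := by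
  have hn₀m : n₀ ≤ m := le_trans hm₁ hm₂
  -- main induction: for all j ≥ m,
  -- V (j+1) ≤ (V m + ∑ Icc m j Δt P) * exp (∑ Icc m j Δt (G + H/δ))
  have main : ∀ j, m ≤ j →
      V (j + 1) ≤ (V m + ∑ n ∈ Finset.Icc m j, Δt n * P n) *
        Real.exp (∑ n ∈ Finset.Icc m j, Δt n * (G n + H n / δ)) := by
    intro j hj
    induction j, hj using Nat.le_induction with
    | base =>
        rw [Finset.Icc_self, Finset.sum_singleton, Finset.sum_singleton]
        exact gronwall_step G H P V Δt m δ (hG m) (hH m) (hP m) hV (hΔt m)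
          (hrec m hn₀m) hδ (hstep m hn₀m)
    | succ j hj ih =>
        have hstep' := gronwall_step G H P V Δt (j + 1) δ (hG _) (hH _) (hP _) hV (hΔt _)
          (hrec _ (by omega)) hδ (hstep _ (by omega))
        rw [Finset.sum_Icc_succ_top (by omega : m ≤ j + 1),
            Finset.sum_Icc_succ_top (by omega : m ≤ j + 1)]
        set S := ∑ n ∈ Finset.Icc m j, Δt n * P n with hS
        set T := ∑ n ∈ Finset.Icc m j, Δt n * (G n + H n / δ) with hT
        have hS0 : 0 ≤ S :=
          Finset.sum_nonneg fun n _ => mul_nonneg (hΔt n) (hP n)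
        have hE1 : (1 : ℝ) ≤ Real.exp T := by
          rw [Real.one_le_exp_iff]
          exact Finset.sum_nonneg fun n _ => mul_nonneg (hΔt n)
            (add_nonneg (hG n) (div_nonneg (hH n) hδ.le))
        have hDP : 0 ≤ Δt (j+1) * P (j+1) := mul_nonneg (hΔt _) (hP _)
        have h1 : V (j + 1 + 1) ≤ (V (j+1) + Δt (j+1) * P (j+1)) *
            Real.exp (Δt (j+1) * (G (j+1) + H (j+1) / δ)) := hstep'
        have h2 : V (j+1) + Δt (j+1) * P (j+1) ≤
            (V m + (S + Δt (j+1) * P (j+1))) * Real.exp T := by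
          have : Δt (j+1) * P (j+1) ≤ Δt (j+1) * P (j+1) * Real.exp T := by
            nlinarith
          have hVm0 : 0 ≤ V m := hV m
          nlinarith [ih]
        calc V (j + 1 + 1)
            ≤ (V (j+1) + Δt (j+1) * P (j+1)) *
              Real.exp (Δt (j+1) * (G (j+1) + H (j+1) / δ)) := h1
          _ ≤ (V m + (S + Δt (j+1) * P (j+1))) * Real.exp T *
              Real.exp (Δt (j+1) * (G (j+1) + H (j+1) / δ)) :=
              mul_le_mul_of_nonneg_right h2 (Real.exp_pos _).le
          _ = (V m + (S + Δt (j+1) * P (j+1))) *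
              Real.exp (T + Δt (j+1) * (G (j+1) + H (j+1) / δ)) := by
              rw [mul_assoc, ← Real.exp_add]
  have h := main (N + K₀) hm₃
  have hEpos : (0:ℝ) < Real.exp (∑ n ∈ Finset.Icc m (N + K₀), Δt n * (G n + H n / δ)) :=
    Real.exp_pos _
  have : (V m + ∑ n ∈ Finset.Icc m (N + K₀), Δt n * P n) *
      Real.exp (∑ n ∈ Finset.Icc m (N + K₀), Δt n * (G n + H n / δ)) ≤
      (V m + a₂) * Real.exp (∑ n ∈ Finset.Icc m (N + K₀), Δt n * (G n + H n / δ)) := by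
    apply mul_le_mul_of_nonneg_right _ hEpos.le
    linarith
  linarith
end
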